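/- Let k ≥ 1. In a twist region with k crossings (negative braid), label the endpoints of the k+1 arcs on each side P^+ and P^- as in the paper: α_i^+ has endpoints a_{i+1} (left) and b_i (right) for 0 ≤ i ≤ k, α_i^- has endpoints a_i and b_{i+1}, with a_0 = b_0 and a_{k+1} = b_{k+1}. Suppose there exist thresholds 1 ≤ i_0 ≤ k+1 and 1 ≤ j_0 ≤ k+1 such that a_j is 'bottom' iff j < i_0 and b_j is 'bottom' iff j < j_0. Then: if i_0 < j_0, both endpoints of each of α_{i_0}^+ (namely a_{i_0+1}, b_{i_0}) lie on opposite boundaries (top/bottom), i.e., α_{i_0}^+ is an I-arc, and similarly for another arc; in all cases (i_0 < j_0, i_0 > j_0, i_0 = j_0) there exist at least two distinct arcs each having one 'bottom' endpoint and one 'top' endpoint. -/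

import Mathlib

/-- An arc through the twist region: `plus i` is the arc `αᵢ⁺` on `P⁺` with
endpoints `a_{i+1}` (left) and `bᵢ` (right); `minus i` is the arc `αᵢ⁻` on `P⁻`
with endpoints `aᵢ` and `b_{i+1}`. -/
inductive TwistArc
  | plus (i : ℕ)
  | minus (i : ℕ)
deriving DecidableEq

/-- Validity: the index of the arc is at most `k`. -/
def TwistArc.valid (k : ℕ) : TwistArc → Prop
  | TwistArc.plus i => i ≤ k
  | TwistArc.minus i => i ≤ k

/-- Given thresholds `i₀, j₀` (`a_j` is bottom iff `j < i₀`, `b_j` is bottom iff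
`j < j₀`), an arc is an I-arc iff its two endpoints carry different labels. -/
def TwistArc.isIArc (i₀ j₀ : ℕ) : TwistArc → Prop
  | TwistArc.plus i => Xor' (i + 1 < i₀) (i < j₀)
  | TwistArc.minus i => Xor' (i < i₀) (i + 1 < j₀)

/-- Lemma `finding I arcs`(1): for any thresholds `1 ≤ i₀, j₀ ≤ k+1`, there are
at least two distinct I-arcs through a twist region with `k ≥ 1` crossings. -/
theorem exists_two_I_arcs (k i₀ j₀ : ℕ) (hk : 1 ≤ k)
    (hi₀ : 1 ≤ i₀) (hi₀' : i₀ ≤ k + 1) (hj₀ : 1 ≤ j₀) (hj₀' : j₀ ≤ k + 1) :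
    ∃ x y : TwistArc, x ≠ y ∧ x.valid k ∧ y.valid k ∧
      x.isIArc i₀ j₀ ∧ y.isIArc i₀ j₀ := by
  rcases lt_trichotomy i₀ j₀ with h | h | h
  · exact ⟨.plus (i₀-1), .plus (j₀-1), by simp [TwistArc.valid, TwistArc.isIArc, Xor', Xor]; omega⟩
  · exact ⟨.plus (i₀-1), .minus (i₀-1), by simp [TwistArc.valid, TwistArc.isIArc, Xor', Xor]; omega⟩
  · exact ⟨.minus (i₀-1), .minus (j₀-1), by simp [TwistArc.valid, TwistArc.isIArc, Xor', Xor]; omega⟩
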